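/- Let s : ℤ/kℤ → {1,…,t} be a circular sequence, T_s its k×t indicator matrix, H the k×k circulant shift matrix with H_{ij} = 𝟙[i = j+1 mod k], L_s = H T_s, and B_k = I_k − (1/k)1_k1_k'. Then tr(T_s' B_k L_s) = f_s − m_s, where f_s = Σ_{j} 𝟙[s(j) = s(j−1)] and m_s = k⁻¹Σᵢ k_i² with k_i = |{j : s(j) = i}|. -/

import Mathlib

open Matrix Finset

/-- `tr(T_s' B_k L_s) = f_s − m_s` for the circular shift `H` and
`L_s = H T_s`. -/
theorem trace_centered_neighbor_design_matrix
    (k t : ℕ) [NeZero k] (s : ZMod k → Fin t) :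
    let T : Matrix (ZMod k) (Fin t) ℝ := Matrix.of fun j i => if s j = i then 1 else 0
    let H : Matrix (ZMod k) (ZMod k) ℝ := Matrix.of fun i j => if i = j + 1 then 1 else 0
    let B : Matrix (ZMod k) (ZMod k) ℝ :=
      1 - (k : ℝ)⁻¹ • vecMulVec (fun _ => 1) (fun _ => 1)
    (Tᵀ * B * (H * T)).trace
      = (∑ j : ZMod k, if s j = s (j - 1) then (1 : ℝ) else 0)
        - (k : ℝ)⁻¹ *
            ∑ i : Fin t, ((Finset.univ.filter fun j : ZMod k => s j = i).card : ℝ) ^ 2 := by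
  intro T H B
  have hHT : ∀ j i, (H * T) j i = T (j - 1) i := by
    intro j i
    simp only [Matrix.mul_apply, H, Matrix.of_apply]
    rw [Finset.sum_eq_single (j - 1)]
    · simp
    · intro b _ hb
      have : j ≠ b + 1 := fun h => hb (by rw [h]; ring)
      simp [this]
    · simp
  have hcol : ∀ i, (∑ j : ZMod k, T j i)
      = ((Finset.univ.filter fun j : ZMod k => s j = i).card : ℝ) := by
    intro i
    simp [T, Finset.sum_boole]
  have hcol' : ∀ i, (∑ j : ZMod k, T (j - 1) i) = (∑ j : ZMod k, T j i) := by
    intro i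
    exact Fintype.sum_equiv (Equiv.subRight (1 : ZMod k)) _ _ (fun j => rfl)
  have hB : Tᵀ * B * (H * T)
      = Tᵀ * (H * T) - (k : ℝ)⁻¹ • (Tᵀ * vecMulVec (fun _ : ZMod k => (1:ℝ)) (fun _ : ZMod k => 1) * (H * T)) := by
    simp [B, Matrix.mul_sub, Matrix.sub_mul, Matrix.mul_smul, Matrix.smul_mul, Matrix.mul_one]
  rw [hB, Matrix.trace_sub, Matrix.trace_smul]
  have h1 : (Tᵀ * (H * T)).trace = ∑ j : ZMod k, if s j = s (j - 1) then (1 : ℝ) else 0 := by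
    rw [Matrix.trace]
    simp only [Matrix.diag_apply, Matrix.mul_apply, Matrix.transpose_apply, hHT]
    rw [Finset.sum_comm]
    refine Finset.sum_congr rfl fun j _ => ?_
    simp only [T, Matrix.of_apply]
    rw [Finset.sum_eq_single (s j)]
    · simp [eq_comm]
    · intro b _ hb; simp [Ne.symm hb]
    · simp
  have h2 : (Tᵀ * vecMulVec (fun _ : ZMod k => (1:ℝ)) (fun _ : ZMod k => 1) * (H * T)).trace
      = ∑ i : Fin t, ((Finset.univ.filter fun j : ZMod k => s j = i).card : ℝ) ^ 2 := by
    rw [Matrix.trace]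
    refine Finset.sum_congr rfl fun i _ => ?_
    simp only [Matrix.diag_apply, Matrix.mul_apply, Matrix.transpose_apply, hHT,
      Matrix.vecMulVec_apply, mul_one]
    rw [← Finset.mul_sum, hcol' i, hcol i]
    ring
  rw [h1, h2, smul_eq_mul]
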